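/- Fixed-α best-case identity: Let s₁, …, s_N ∈ ℝⁿ with empirical measure Q_N, sample mean s̄ and empirical covariance Σ. Let φ ∈ ℝⁿ with φ ≠ 0, δ > 0, and let α ∈ ℝ satisfy C² ≤ δ·‖φ‖₂² where C := α − φ·s̄. Then inf{ φᵀΣ_Q φ : Q ∈ U_δ(Q_N), E^Q[φ·S] = α } = max(√(φᵀΣφ) − √(δ·‖φ‖₂² − C²), 0)², where φᵀΣ_Q φ = E^Q[(φ·S)²] − α². -/

import Mathlib

set_option linter.unusedSectionVars false
set_option maxHeartbeats 1000000

open MeasureTheory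
open scoped ENNReal BigOperators

/-- Euclidean dot product on `Fin n → ℝ`. -/
noncomputable def eDot {n : ℕ} (a b : Fin n → ℝ) : ℝ := ∑ i, a i * b i

/-- Transport cost of a coupling `π` for the quadratic cost `c(u,v) = ‖u − v‖₂²`. -/
noncomputable def transportCost {n : ℕ}
    (π : Measure ((Fin n → ℝ) × (Fin n → ℝ))) : ℝ≥0∞ :=
  ∫⁻ p, ENNReal.ofReal (∑ i, (p.1 i - p.2 i) ^ 2) ∂π

/-- Optimal transport cost `D_c(Q, Q')` with quadratic cost `c(u,v) = ‖u − v‖₂²`. -/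
noncomputable def otCost {n : ℕ} (Q Q' : Measure (Fin n → ℝ)) : ℝ≥0∞ :=
  sInf { r | ∃ π : Measure ((Fin n → ℝ) × (Fin n → ℝ)),
      IsProbabilityMeasure π ∧ π.map Prod.fst = Q ∧ π.map Prod.snd = Q' ∧
      r = transportCost π }

/-- Empirical measure `Q_N = (1/N)·Σᵢ δ_{sᵢ}` of the sample points `s₁, …, s_N`. -/
noncomputable def empiricalMeasure {n N : ℕ} (s : Fin N → (Fin n → ℝ)) :
    Measure (Fin n → ℝ) :=
  (N : ℝ≥0∞)⁻¹ • ∑ i, Measure.dirac (s i)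



section EmpLike

variable {α : Type*} [MeasurableSpace α] [MeasurableSingletonClass α] {N : ℕ}

noncomputable def empLike (p : Fin N → α) : Measure α :=
  (N : ℝ≥0∞)⁻¹ • ∑ i, Measure.dirac (p i)

lemma integrable_empLike (hN : 0 < N) (p : Fin N → α) (f : α → ℝ) :
    Integrable f (empLike p) := by
  refine Integrable.smul_measure ?_ ?_
  · exact integrable_finset_sum_measure.2 fun i _ =>
      (integrable_congr (MeasureTheory.ae_eq_dirac f)).2 (integrable_const _)
  · simp [ENNReal.inv_ne_top, Nat.pos_iff_ne_zero.mp hN]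

lemma isProb_empLike (hN : 0 < N) (p : Fin N → α) :
    IsProbabilityMeasure (empLike p) := by
  constructor
  rw [empLike, Measure.smul_apply, Measure.finset_sum_apply]
  simp [ENNReal.inv_mul_cancel, Nat.pos_iff_ne_zero.mp hN]

lemma lintegral_empLike (p : Fin N → α) (f : α → ℝ≥0∞) :
    ∫⁻ a, f a ∂(empLike p) = (N : ℝ≥0∞)⁻¹ * ∑ i, f (p i) := by
  rw [empLike, lintegral_smul_measure, lintegral_finset_sum_measure]
  simp [lintegral_dirac]

lemma integral_empLike (p : Fin N → α) (f : α → ℝ) :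
    ∫ a, f a ∂(empLike p) = (N : ℝ)⁻¹ * ∑ i, f (p i) := by
  rw [empLike, integral_smul_measure, integral_finset_sum_measure
    (fun i _ => (integrable_congr (MeasureTheory.ae_eq_dirac f)).2 (integrable_const _))]
  simp [integral_dirac, ENNReal.toReal_inv, smul_eq_mul]

lemma map_finsetSum' {β : Type*} [MeasurableSpace β] {ι : Type*} (t : Finset ι)
    (μ : ι → Measure α) {g : α → β} (hg : Measurable g) :
    (∑ i ∈ t, μ i).map g = ∑ i ∈ t, (μ i).map g := by
  induction t using Finset.cons_induction with
  | empty => simp [Measure.map_zero]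
  | cons a t ha ih =>
      rw [Finset.sum_cons, Finset.sum_cons, ← ih, Measure.map_add _ _ hg]

lemma map_empLike {β : Type*} [MeasurableSpace β] [MeasurableSingletonClass β]
    (p : Fin N → α) {g : α → β} (hg : Measurable g) :
    (empLike p).map g = empLike (fun i => g (p i)) := by
  rw [empLike, Measure.map_smul, map_finsetSum' _ _ hg, empLike]
  simp [Measure.map_dirac' hg]

end EmpLike

section CoreLemmas


lemma sqrt_add_le' {a b : ℝ} (ha : 0 ≤ a) (hb : 0 ≤ b) :
    Real.sqrt (a + b) ≤ Real.sqrt a + Real.sqrt b := by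
  rw [show a + b = a + b from rfl]
  have h : a + b ≤ (Real.sqrt a + Real.sqrt b) ^ 2 := by
    have := Real.sq_sqrt ha
    have := Real.sq_sqrt hb
    nlinarith [Real.sqrt_nonneg a, Real.sqrt_nonneg b]
  calc Real.sqrt (a + b) ≤ Real.sqrt ((Real.sqrt a + Real.sqrt b) ^ 2) :=
        Real.sqrt_le_sqrt h
    _ = Real.sqrt a + Real.sqrt b := Real.sqrt_sq (by positivity)

lemma le_sqrt_mul_sqrt_of_forall {A B x : ℝ} (hA : 0 ≤ A) (hB : 0 ≤ B)
    (h : ∀ l : ℝ, 0 < l → x ≤ (l * A + l⁻¹ * B) / 2) :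
    x ≤ Real.sqrt A * Real.sqrt B := by
  rcases eq_or_lt_of_le hA with hA0 | hApos
  · -- A = 0
    have hx : x ≤ 0 := by
      refine le_of_forall_pos_le_add fun ε hε => ?_
      have := h ((B + 1) / (2 * ε)) (by positivity)
      rw [← hA0] at this
      have hle : ((B + 1) / (2 * ε))⁻¹ * B / 2 ≤ ε := by
        rw [inv_div, div_mul_eq_mul_div, div_div]
        rw [div_le_iff₀ (by positivity)]
        nlinarith
      calc x ≤ (((B + 1) / (2 * ε)) * 0 + ((B + 1) / (2 * ε))⁻¹ * B) / 2 := this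
        _ = ((B + 1) / (2 * ε))⁻¹ * B / 2 := by ring
        _ ≤ ε := hle
        _ = 0 + ε := by ring
    calc x ≤ 0 := hx
      _ ≤ _ := by positivity
  rcases eq_or_lt_of_le hB with hB0 | hBpos
  · have hx : x ≤ 0 := by
      refine le_of_forall_pos_le_add fun ε hε => ?_
      have := h (2 * ε / (A + 1)) (by positivity)
      rw [← hB0] at this
      have hle : 2 * ε / (A + 1) * A / 2 ≤ ε := by
        rw [div_mul_eq_mul_div, div_div, div_le_iff₀ (by positivity)]
        nlinarith
      calc x ≤ (2 * ε / (A + 1) * A + (2 * ε / (A + 1))⁻¹ * 0) / 2 := this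
        _ = 2 * ε / (A + 1) * A / 2 := by ring
        _ ≤ ε := hle
        _ = 0 + ε := by ring
    calc x ≤ 0 := hx
      _ ≤ _ := by positivity
  · have hsA : 0 < Real.sqrt A := Real.sqrt_pos.2 hApos
    have hsB : 0 < Real.sqrt B := Real.sqrt_pos.2 hBpos
    have := h (Real.sqrt B / Real.sqrt A) (by positivity)
    have hAA : Real.sqrt A * Real.sqrt A = A := Real.mul_self_sqrt hA
    have hBB : Real.sqrt B * Real.sqrt B = B := Real.mul_self_sqrt hB
    have heq : (Real.sqrt B / Real.sqrt A * A + (Real.sqrt B / Real.sqrt A)⁻¹ * B) / 2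
        = Real.sqrt A * Real.sqrt B := by
      rw [inv_div]
      field_simp
      nlinarith
    linarith [this, heq.ge, heq.le]

variable {α : Type*} [MeasurableSpace α]

lemma neg_sqrt_sqrt_le_integral_mul (π : Measure α) [IsProbabilityMeasure π]
    {a b : α → ℝ} (ha2 : Integrable (fun x => a x ^ 2) π)
    (hb2 : Integrable (fun x => b x ^ 2) π)
    (hab : Integrable (fun x => a x * b x) π) :
    -(Real.sqrt (∫ x, a x ^ 2 ∂π) * Real.sqrt (∫ x, b x ^ 2 ∂π)) ≤ ∫ x, a x * b x ∂π := by
  have hA : 0 ≤ ∫ x, a x ^ 2 ∂π := integral_nonneg fun x => sq_nonneg _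
  have hB : 0 ≤ ∫ x, b x ^ 2 ∂π := integral_nonneg fun x => sq_nonneg _
  rw [neg_le]
  refine le_sqrt_mul_sqrt_of_forall hA hB fun l hl => ?_
  have hpt : ∀ x, 0 ≤ l * a x ^ 2 + 2 * (a x * b x) + l⁻¹ * b x ^ 2 := by
    intro x
    have h1 : 0 ≤ (l * a x + b x) ^ 2 / l := div_nonneg (sq_nonneg _) hl.le
    have h2 : (l * a x + b x) ^ 2 / l = l * a x ^ 2 + 2 * (a x * b x) + l⁻¹ * b x ^ 2 := by
      field_simp
      ring
    linarith [h2 ▸ h1]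
  have hint : Integrable (fun x => l * a x ^ 2 + 2 * (a x * b x) + l⁻¹ * b x ^ 2) π :=
    ((ha2.const_mul l).add (hab.const_mul 2)).add (hb2.const_mul l⁻¹)
  have h0 : 0 ≤ ∫ x, (l * a x ^ 2 + 2 * (a x * b x) + l⁻¹ * b x ^ 2) ∂π :=
    integral_nonneg hpt
  have i1 : Integrable (fun x => l * a x ^ 2 + 2 * (a x * b x)) π :=
    (ha2.const_mul l).add (hab.const_mul 2)
  have i2 : Integrable (fun x => l⁻¹ * b x ^ 2) π := hb2.const_mul l⁻¹
  rw [integral_add i1 i2, integral_add (ha2.const_mul l) (hab.const_mul 2),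
      integral_const_mul, integral_const_mul, integral_const_mul] at h0
  linarith

lemma integral_sub_const_sq (π : Measure α) [IsProbabilityMeasure π]
    {H : α → ℝ} (hH : Integrable H π) (hH2 : Integrable (fun x => H x ^ 2) π) (c : ℝ) :
    ∫ x, (H x - c) ^ 2 ∂π = (∫ x, H x ^ 2 ∂π) - 2 * c * (∫ x, H x ∂π) + c ^ 2 := by
  have : (fun x => (H x - c) ^ 2) = fun x => H x ^ 2 - (2 * c) * H x + c ^ 2 := by
    funext x; ring
  have i1 : Integrable (fun x => H x ^ 2 - 2 * c * H x) π := hH2.sub (hH.const_mul (2 * c))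
  rw [this, integral_add i1 (integrable_const _),
      integral_sub hH2 (hH.const_mul (2 * c)), integral_const_mul, integral_const]
  simp [measure_univ]

lemma sqrt_var_triangle (π : Measure α) [IsProbabilityMeasure π]
    {F G : α → ℝ} (hF : Integrable F π) (hG : Integrable G π)
    (hF2 : Integrable (fun x => F x ^ 2) π) (hG2 : Integrable (fun x => G x ^ 2) π)
    (hFG : Integrable (fun x => F x * G x) π) :
    Real.sqrt ((∫ x, G x ^ 2 ∂π) - (∫ x, G x ∂π) ^ 2) ≤
      Real.sqrt ((∫ x, F x ^ 2 ∂π) - (∫ x, F x ∂π) ^ 2) +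
      Real.sqrt ((∫ x, (F x - G x) ^ 2 ∂π) - ((∫ x, F x ∂π) - (∫ x, G x ∂π)) ^ 2) := by
  set EF := ∫ x, F x ∂π with hEF
  set EG := ∫ x, G x ∂π with hEG
  set a : α → ℝ := fun x => G x - EG with ha
  set b : α → ℝ := fun x => (F x - G x) - (EF - EG) with hb
  have hW : Integrable (fun x => F x - G x) π := hF.sub hG
  have hW2 : Integrable (fun x => (F x - G x) ^ 2) π := by
    have : (fun x => (F x - G x) ^ 2) = fun x => F x ^ 2 - 2 * (F x * G x) + G x ^ 2 := by
      funext x; ring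
    rw [this]
    exact (hF2.sub (hFG.const_mul 2)).add hG2
  have ha2 : Integrable (fun x => a x ^ 2) π := by
    have : (fun x => a x ^ 2) = fun x => (G x - EG) ^ 2 := rfl
    rw [this]
    have h2 : (fun x => (G x - EG) ^ 2) = fun x => G x ^ 2 - (2 * EG) * G x + EG ^ 2 := by
      funext x; ring
    rw [h2]
    exact (hG2.sub (hG.const_mul (2 * EG))).add (integrable_const _)
  have hb2 : Integrable (fun x => b x ^ 2) π := by
    have h2 : (fun x => b x ^ 2) =
        fun x => (F x - G x) ^ 2 - (2 * (EF - EG)) * (F x - G x) + (EF - EG) ^ 2 := by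
      funext x; ring
    rw [h2]
    exact (hW2.sub (hW.const_mul (2 * (EF - EG)))).add (integrable_const _)
  have hab : Integrable (fun x => a x * b x) π := by
    have h2 : (fun x => a x * b x) = fun x =>
        (F x * G x) - G x ^ 2 - (EF - EG) * G x - EG * F x + EG * G x + EG * (EF - EG) := by
      funext x; simp only [ha, hb]; ring
    rw [h2]
    exact (((((hFG.sub hG2).sub (hG.const_mul (EF - EG))).sub
      (hF.const_mul EG)).add (hG.const_mul EG)).add (integrable_const _))
  -- values of the three variances
  have hVa : ∫ x, a x ^ 2 ∂π = (∫ x, G x ^ 2 ∂π) - EG ^ 2 := by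
    rw [show (fun x => a x ^ 2) = fun x => (G x - EG) ^ 2 from rfl,
      integral_sub_const_sq π hG hG2 EG]
    ring
  have hVb : ∫ x, b x ^ 2 ∂π = (∫ x, (F x - G x) ^ 2 ∂π) - (EF - EG) ^ 2 := by
    rw [show (fun x => b x ^ 2) = fun x => ((F x - G x) - (EF - EG)) ^ 2 from rfl,
      integral_sub_const_sq π hW hW2 (EF - EG)]
    have hEW : ∫ x, (F x - G x) ∂π = EF - EG := integral_sub hF hG
    rw [hEW]; ring
  have hVf : ∫ x, (fun x => a x + b x) x ^ 2 ∂π = (∫ x, F x ^ 2 ∂π) - EF ^ 2 := by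
    have h2 : (fun x => (a x + b x) ^ 2) = fun x => (F x - EF) ^ 2 := by
      funext x; simp only [ha, hb]; ring
    simp only [h2]
    rw [integral_sub_const_sq π hF hF2 EF]
    ring
  -- expansion of Vf
  have hsum : ∫ x, (a x + b x) ^ 2 ∂π =
      (∫ x, a x ^ 2 ∂π) + 2 * (∫ x, a x * b x ∂π) + (∫ x, b x ^ 2 ∂π) := by
    have h2 : (fun x => (a x + b x) ^ 2) = fun x => a x ^ 2 + 2 * (a x * b x) + b x ^ 2 := by
      funext x; ring
    have i1 : Integrable (fun x => a x ^ 2 + 2 * (a x * b x)) π := ha2.add (hab.const_mul 2)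
    rw [h2, integral_add i1 hb2, integral_add ha2 (hab.const_mul 2), integral_const_mul]
  have hcs := neg_sqrt_sqrt_le_integral_mul π ha2 hb2 hab
  set Va := ∫ x, a x ^ 2 ∂π
  set Vb := ∫ x, b x ^ 2 ∂π
  have hVa0 : 0 ≤ Va := integral_nonneg fun x => sq_nonneg _
  have hVb0 : 0 ≤ Vb := integral_nonneg fun x => sq_nonneg _
  have hkey : (Real.sqrt Va - Real.sqrt Vb) ^ 2 ≤ ∫ x, (a x + b x) ^ 2 ∂π := by
    rw [hsum]
    have h1 : Real.sqrt Va ^ 2 = Va := Real.sq_sqrt hVa0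
    have h2 : Real.sqrt Vb ^ 2 = Vb := Real.sq_sqrt hVb0
    nlinarith [hcs]
  have hfin : Real.sqrt Va ≤ Real.sqrt (∫ x, (a x + b x) ^ 2 ∂π) + Real.sqrt Vb := by
    have := Real.sqrt_le_sqrt hkey
    rw [Real.sqrt_sq_eq_abs] at this
    have habs : Real.sqrt Va - Real.sqrt Vb ≤ |Real.sqrt Va - Real.sqrt Vb| := le_abs_self _
    linarith
  rw [hVa, hVb] at *
  rw [hVf] at hfin
  exact hfin

end CoreLemmas
theorem stmt_7 {n N : ℕ} (hN : 0 < N) (s : Fin N → (Fin n → ℝ))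
    (φ : Fin n → ℝ) (hφ : φ ≠ 0) (δ : ℝ) (hδ : 0 < δ) (α : ℝ) :
    let sbar : Fin n → ℝ := fun j => (N : ℝ)⁻¹ * ∑ i, s i j
    let μbar : ℝ := eDot φ sbar
    let C : ℝ := α - μbar
    let V : ℝ := (N : ℝ)⁻¹ * ∑ i, (eDot φ (s i) - μbar) ^ 2
    let nsq : ℝ := ∑ i, φ i ^ 2
    C ^ 2 ≤ δ * nsq →
    sInf { v | ∃ Q : Measure (Fin n → ℝ), IsProbabilityMeasure Q ∧
        otCost Q (empiricalMeasure s) ≤ ENNReal.ofReal δ ∧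
        Integrable (fun x => eDot φ x) Q ∧ Integrable (fun x => (eDot φ x) ^ 2) Q ∧
        (∫ x, eDot φ x ∂Q) = α ∧ v = (∫ x, (eDot φ x) ^ 2 ∂Q) - α ^ 2 }
      = (max (Real.sqrt V - Real.sqrt (δ * nsq - C ^ 2)) 0) ^ 2 := by
  intro sbar μbar C V nsq hC
  classical
  have hsbar : sbar = fun j => (N : ℝ)⁻¹ * ∑ i, s i j := rfl
  have hμdef : μbar = eDot φ sbar := rfl
  have hCdef : C = α - μbar := rfl
  have hVdef : V = (N : ℝ)⁻¹ * ∑ i, (eDot φ (s i) - μbar) ^ 2 := rfl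
  have hnsqdef : nsq = ∑ i, φ i ^ 2 := rfl
  have hemp : empiricalMeasure s = empLike s := rfl
  obtain ⟨i0, hi0⟩ : ∃ i, φ i ≠ 0 := Function.ne_iff.mp hφ
  have hnsq : 0 < nsq := by
    rw [hnsqdef]
    have h1 : (0:ℝ) < φ i0 ^ 2 := by positivity
    exact lt_of_lt_of_le h1
      (Finset.single_le_sum (fun i _ => sq_nonneg (φ i)) (Finset.mem_univ i0))
  have hNR : (0:ℝ) < N := Nat.cast_pos.mpr hN
  have hmeas : Measurable (eDot φ) := by
    unfold eDot
    exact Finset.measurable_sum _ fun i _ => by fun_prop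
  have hmeas2 : Measurable (fun x => (eDot φ x) ^ 2) := hmeas.pow_const 2
  set y : Fin N → ℝ := fun i => eDot φ (s i) with hy
  have hμ : μbar = (N : ℝ)⁻¹ * ∑ i, y i := by
    rw [hμdef, hsbar]
    show (∑ j, φ j * ((N : ℝ)⁻¹ * ∑ i, s i j)) = _
    have h1 : ∀ j, φ j * ((N : ℝ)⁻¹ * ∑ i, s i j) = (N : ℝ)⁻¹ * ∑ i, φ j * s i j := by
      intro j; rw [Finset.mul_sum, Finset.mul_sum, Finset.mul_sum]
      refine Finset.sum_congr rfl fun i _ => by ring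
    rw [Finset.sum_congr rfl fun j _ => h1 j, ← Finset.mul_sum, Finset.sum_comm]
    rfl
  have hsum_y : ∑ i, y i = N * μbar := by rw [hμ]; field_simp
  have hdev : ∑ i, (y i - μbar) = 0 := by
    rw [Finset.sum_sub_distrib, Finset.sum_const, hsum_y, Finset.card_univ,
      Fintype.card_fin, nsmul_eq_mul]
    ring
  have hVsum : ∑ i, (y i - μbar) ^ 2 = N * V := by
    rw [hVdef]; field_simp
    rfl
  have hV0 : 0 ≤ V := by
    rw [hVdef]; positivity
  have hsum_sq : ∑ i, y i ^ 2 = N * (V + μbar ^ 2) := by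
    have expand : ∑ i, (y i - μbar) ^ 2
        = (∑ i, y i ^ 2) - 2 * μbar * (∑ i, y i) + N * μbar ^ 2 := by
      rw [Finset.sum_congr rfl (fun i (_ : i ∈ Finset.univ) =>
        (by ring : (y i - μbar) ^ 2 = y i ^ 2 - 2 * μbar * y i + μbar ^ 2))]
      rw [Finset.sum_add_distrib, Finset.sum_sub_distrib, ← Finset.mul_sum,
        Finset.sum_const, Finset.card_univ, Fintype.card_fin, nsmul_eq_mul]
    rw [expand, hsum_y] at hVsum
    linarith
  set Δ := δ * nsq - C ^ 2 with hΔdef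
  have hΔ : 0 ≤ Δ := by rw [hΔdef]; linarith
  set R := max (Real.sqrt V - Real.sqrt Δ) 0 with hRdef
  have hR0 : 0 ≤ R := le_max_right _ _
  -- construction of the optimal measure
  set r := min (Real.sqrt V) (Real.sqrt Δ) with hr
  have hr0 : 0 ≤ r := le_min (Real.sqrt_nonneg _) (Real.sqrt_nonneg _)
  set β := if V = 0 then (0:ℝ) else -(r / Real.sqrt V) with hβ
  have h1β : (1 + β) * Real.sqrt V = Real.sqrt V - r := by
    by_cases hV : V = 0
    · have hrz : r = 0 := by
        rw [hr, hV, Real.sqrt_zero]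
        exact min_eq_left (Real.sqrt_nonneg _)
      rw [hβ, if_pos hV, hV, hrz, Real.sqrt_zero]; ring
    · have hsV : 0 < Real.sqrt V := Real.sqrt_pos.2 (lt_of_le_of_ne hV0 (Ne.symm hV))
      rw [hβ, if_neg hV]; field_simp; ring
  have h1β0 : 0 ≤ 1 + β := by
    by_cases hV : V = 0
    · rw [hβ, if_pos hV]; norm_num
    · have hsV : 0 < Real.sqrt V := Real.sqrt_pos.2 (lt_of_le_of_ne hV0 (Ne.symm hV))
      rw [hβ, if_neg hV]
      have h1 : r / Real.sqrt V ≤ 1 := (div_le_one hsV).2 (min_le_left _ _)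
      linarith
  have hβ2V : β ^ 2 * V ≤ Δ := by
    by_cases hV : V = 0
    · rw [hV]; simpa using hΔ
    · have hsV : 0 < Real.sqrt V := Real.sqrt_pos.2 (lt_of_le_of_ne hV0 (Ne.symm hV))
      have hVe : Real.sqrt V ^ 2 = V := Real.sq_sqrt hV0
      rw [hβ, if_neg hV]
      have h1 : (-(r / Real.sqrt V)) ^ 2 * V = r ^ 2 := by
        rw [neg_pow, div_pow]
        field_simp
        rw [hVe]
      rw [h1]
      have h2 : r ≤ Real.sqrt Δ := min_le_right _ _
      calc r ^ 2 ≤ Real.sqrt Δ ^ 2 := pow_le_pow_left₀ hr0 h2 2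
        _ = Δ := Real.sq_sqrt hΔ
  have hsub : Real.sqrt V - r = R := by
    rw [hRdef, hr]
    rcases le_total (Real.sqrt V) (Real.sqrt Δ) with h | h
    · rw [min_eq_left h, max_eq_right (by linarith)]; ring
    · rw [min_eq_right h, max_eq_left (by linarith)]
  have hv0R : (1 + β) ^ 2 * V = R ^ 2 := by
    have h1 : ((1 + β) * Real.sqrt V) ^ 2 = (1 + β) ^ 2 * V := by
      rw [mul_pow, Real.sq_sqrt hV0]
    rw [← h1, h1β, hsub]
  set w : Fin N → ℝ := fun i => C + β * (y i - μbar) with hw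
  set x : Fin N → (Fin n → ℝ) := fun i j => s i j + (w i / nsq) * φ j with hx
  have hzx : ∀ i, eDot φ (x i) = y i + w i := by
    intro i
    show (∑ j, φ j * (s i j + (w i / nsq) * φ j)) = _
    have h1 : ∀ j, φ j * (s i j + w i / nsq * φ j)
        = φ j * s i j + (w i / nsq) * φ j ^ 2 := fun j => by ring
    rw [Finset.sum_congr rfl fun j _ => h1 j, Finset.sum_add_distrib, ← Finset.mul_sum,
      ← hnsqdef, div_mul_cancel₀ _ (ne_of_gt hnsq)]
    rfl
  have hsum_w : ∑ i, w i = N * C := by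
    rw [hw]
    show (∑ i, (C + β * (y i - μbar))) = _
    rw [Finset.sum_add_distrib, ← Finset.mul_sum, hdev, Finset.sum_const, Finset.card_univ,
      Fintype.card_fin, nsmul_eq_mul]
    ring
  have hsum_w2 : ∑ i, w i ^ 2 = N * (C ^ 2 + β ^ 2 * V) := by
    have expand : ∀ i : Fin N, w i ^ 2
        = C ^ 2 + 2 * C * β * (y i - μbar) + β ^ 2 * (y i - μbar) ^ 2 := by
      intro i; rw [hw]; ring
    rw [Finset.sum_congr rfl fun i _ => expand i, Finset.sum_add_distrib,
      Finset.sum_add_distrib, ← Finset.mul_sum, ← Finset.mul_sum, hdev, hVsum,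
      Finset.sum_const, Finset.card_univ, Fintype.card_fin, nsmul_eq_mul]
    ring
  have hz2 : ∀ i, y i + w i = α + (1 + β) * (y i - μbar) := by
    intro i; rw [hw, hCdef]; ring
  have hQmean : (N : ℝ)⁻¹ * ∑ i, (y i + w i) = α := by
    rw [Finset.sum_add_distrib, hsum_y, hsum_w, hCdef]
    field_simp
    ring
  have hQsq : (N : ℝ)⁻¹ * ∑ i, (y i + w i) ^ 2 = α ^ 2 + (1 + β) ^ 2 * V := by
    rw [Finset.sum_congr rfl fun i _ => congrArg (· ^ 2) (hz2 i)]
    have expand : ∀ i : Fin N, (α + (1 + β) * (y i - μbar)) ^ 2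
        = α ^ 2 + 2 * α * (1 + β) * (y i - μbar) + (1 + β) ^ 2 * (y i - μbar) ^ 2 := by
      intro i; ring
    rw [Finset.sum_congr rfl fun i _ => expand i, Finset.sum_add_distrib,
      Finset.sum_add_distrib, ← Finset.mul_sum, ← Finset.mul_sum, hdev, hVsum,
      Finset.sum_const, Finset.card_univ, Fintype.card_fin, nsmul_eq_mul]
    field_simp
    ring
  -- membership of R^2
  set Q₀ := empLike x with hQ₀
  haveI hQ₀p : IsProbabilityMeasure Q₀ := isProb_empLike hN x
  set S := { v | ∃ Q : Measure (Fin n → ℝ), IsProbabilityMeasure Q ∧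
        otCost Q (empiricalMeasure s) ≤ ENNReal.ofReal δ ∧
        Integrable (fun x => eDot φ x) Q ∧ Integrable (fun x => (eDot φ x) ^ 2) Q ∧
        (∫ x, eDot φ x ∂Q) = α ∧ v = (∫ x, (eDot φ x) ^ 2 ∂Q) - α ^ 2 } with hS
  have hmem : R ^ 2 ∈ S := by
    refine ⟨Q₀, hQ₀p, ?_, integrable_empLike hN x _, integrable_empLike hN x _, ?_, ?_⟩
    · -- transport cost
      set π : Measure ((Fin n → ℝ) × (Fin n → ℝ)) := empLike (fun i => (x i, s i)) with hπ
      haveI : IsProbabilityMeasure π := isProb_empLike hN _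
      have hfst : π.map Prod.fst = Q₀ := by
        rw [hπ, map_empLike _ measurable_fst]
      have hsnd : π.map Prod.snd = empiricalMeasure s := by
        rw [hπ, map_empLike _ measurable_snd, hemp]
      have hcost : transportCost π ≤ ENNReal.ofReal δ := by
        rw [transportCost, hπ, lintegral_empLike]
        have hterm : ∀ i : Fin N,
            (∑ j, (((x i, s i).1 : Fin n → ℝ) j - ((x i, s i).2 : Fin n → ℝ) j) ^ 2)
              = w i ^ 2 / nsq := by
          intro i
          show (∑ j, (x i j - s i j) ^ 2) = _
          have h1 : ∀ j, (x i j - s i j) ^ 2 = (w i / nsq) ^ 2 * φ j ^ 2 := by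
            intro j
            show (s i j + (w i / nsq) * φ j - s i j) ^ 2 = _
            ring
          rw [Finset.sum_congr rfl fun j _ => h1 j, ← Finset.mul_sum, ← hnsqdef]
          field_simp
        have hsum : (∑ i : Fin N, ENNReal.ofReal
            (∑ j, (((x i, s i).1 : Fin n → ℝ) j - ((x i, s i).2 : Fin n → ℝ) j) ^ 2))
              = ENNReal.ofReal (∑ i, w i ^ 2 / nsq) := by
          rw [Finset.sum_congr rfl fun i _ => congrArg ENNReal.ofReal (hterm i)]
          rw [ENNReal.ofReal_sum_of_nonneg fun i _ => by positivity]
        rw [hsum]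
        have hle : (∑ i, w i ^ 2 / nsq) ≤ N * δ := by
          rw [← Finset.sum_div, hsum_w2]
          rw [div_le_iff₀ hnsq]
          have : C ^ 2 + β ^ 2 * V ≤ δ * nsq := by
            have := hβ2V
            rw [hΔdef] at this
            linarith
          calc (N:ℝ) * (C ^ 2 + β ^ 2 * V) ≤ (N:ℝ) * (δ * nsq) :=
                mul_le_mul_of_nonneg_left this hNR.le
            _ = (N:ℝ) * δ * nsq := by ring
        calc (N : ℝ≥0∞)⁻¹ * ENNReal.ofReal (∑ i, w i ^ 2 / nsq)
            ≤ (N : ℝ≥0∞)⁻¹ * ENNReal.ofReal ((N : ℝ) * δ) :=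
              mul_le_mul_right (ENNReal.ofReal_le_ofReal hle) _
          _ = ENNReal.ofReal δ := by
              rw [ENNReal.ofReal_mul (le_of_lt hNR), ENNReal.ofReal_natCast,
                ← mul_assoc, ENNReal.inv_mul_cancel (by exact_mod_cast hN.ne')
                  (ENNReal.natCast_ne_top N), one_mul]
      exact le_trans (sInf_le ⟨π, inferInstance, hfst, hsnd, rfl⟩) hcost
    · -- mean
      rw [hQ₀, integral_empLike,
        Finset.sum_congr rfl fun i _ => hzx i]
      exact hQmean
    · -- value
      rw [hQ₀, integral_empLike,
        Finset.sum_congr rfl fun i _ => congrArg (· ^ 2) (hzx i)]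
      rw [hQsq, hv0R]
      ring
  -- lower bound
  have hlow : ∀ v ∈ S, R ^ 2 ≤ v := by
    rintro v ⟨Q, hQp, hQcost, hi1, hi2, hm, rfl⟩
    haveI := hQp
    have hv0' : 0 ≤ (∫ x, (eDot φ x) ^ 2 ∂Q) - α ^ 2 := by
      have h1 := integral_sub_const_sq Q hi1 hi2 α
      have h2 : 0 ≤ ∫ x, (eDot φ x - α) ^ 2 ∂Q := integral_nonneg fun x => sq_nonneg _
      rw [h1, hm] at h2
      linarith
    have key : ∀ η : ℝ, 0 < η →
        Real.sqrt V ≤ Real.sqrt ((∫ x, (eDot φ x) ^ 2 ∂Q) - α ^ 2)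
          + Real.sqrt (nsq * (δ + η) - C ^ 2) := by
      intro η hη
      have hlt : otCost Q (empiricalMeasure s) < ENNReal.ofReal (δ + η) :=
        lt_of_le_of_lt hQcost
          ((ENNReal.ofReal_lt_ofReal_iff (by linarith)).2 (by linarith))
      rw [otCost] at hlt
      obtain ⟨ρ, ⟨π, hπp, hfst, hsnd, hρeq⟩, hρ⟩ := sInf_lt_iff.mp hlt
      subst hρeq
      haveI := hπp
      have hF : Integrable (fun p : (Fin n → ℝ) × (Fin n → ℝ) => eDot φ p.1) π := by
        rw [← hfst] at hi1
        exact (integrable_map_measure hmeas.aestronglyMeasurable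
          measurable_fst.aemeasurable).1 hi1
      have hF2 : Integrable (fun p : (Fin n → ℝ) × (Fin n → ℝ) => (eDot φ p.1) ^ 2) π := by
        rw [← hfst] at hi2
        exact (integrable_map_measure hmeas2.aestronglyMeasurable
          measurable_fst.aemeasurable).1 hi2
      have hG : Integrable (fun p : (Fin n → ℝ) × (Fin n → ℝ) => eDot φ p.2) π := by
        have h1 : Integrable (fun x => eDot φ x) (π.map Prod.snd) := by
          rw [hsnd, hemp]; exact integrable_empLike hN s _
        exact (integrable_map_measure hmeas.aestronglyMeasurable
          measurable_snd.aemeasurable).1 h1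
      have hG2 : Integrable (fun p : (Fin n → ℝ) × (Fin n → ℝ) => (eDot φ p.2) ^ 2) π := by
        have h1 : Integrable (fun x => (eDot φ x) ^ 2) (π.map Prod.snd) := by
          rw [hsnd, hemp]; exact integrable_empLike hN s _
        exact (integrable_map_measure hmeas2.aestronglyMeasurable
          measurable_snd.aemeasurable).1 h1
      have hEF : ∫ p, eDot φ (p : (Fin n → ℝ) × (Fin n → ℝ)).1 ∂π = α := by
        rw [← hfst] at hm
        rw [← integral_map measurable_fst.aemeasurable hmeas.aestronglyMeasurable]
        exact hm
      have hEF2 : ∫ p, (eDot φ (p : (Fin n → ℝ) × (Fin n → ℝ)).1) ^ 2 ∂π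
          = ∫ x, (eDot φ x) ^ 2 ∂Q := by
        rw [← hfst, ← integral_map measurable_fst.aemeasurable hmeas2.aestronglyMeasurable]
      have hEG : ∫ p, eDot φ (p : (Fin n → ℝ) × (Fin n → ℝ)).2 ∂π = μbar := by
        rw [← integral_map measurable_snd.aemeasurable hmeas.aestronglyMeasurable,
          hsnd, hemp, integral_empLike, hμ]
      have hEG2 : ∫ p, (eDot φ (p : (Fin n → ℝ) × (Fin n → ℝ)).2) ^ 2 ∂π
          = V + μbar ^ 2 := by
        rw [← integral_map measurable_snd.aemeasurable hmeas2.aestronglyMeasurable,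
          hsnd, hemp, integral_empLike]
        rw [show (∑ i, (eDot φ (s i)) ^ 2) = ∑ i, y i ^ 2 from rfl, hsum_sq]
        field_simp
      have hFG : Integrable
          (fun p : (Fin n → ℝ) × (Fin n → ℝ) => eDot φ p.1 * eDot φ p.2) π := by
        have hbd : Integrable (fun p : (Fin n → ℝ) × (Fin n → ℝ) =>
            ((eDot φ p.1) ^ 2 + (eDot φ p.2) ^ 2) / 2) π := (hF2.add hG2).div_const 2
        refine Integrable.mono' hbd
          (hF.1.mul hG.1) (Filter.Eventually.of_forall fun p => ?_)
        rw [Real.norm_eq_abs]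
        rw [abs_le]
        constructor
        · have h := sq_nonneg (eDot φ p.1 + eDot φ p.2)
          rw [add_sq] at h
          linarith
        · have h := sq_nonneg (eDot φ p.1 - eDot φ p.2)
          rw [sub_sq] at h
          linarith
      have hW2int : Integrable
          (fun p : (Fin n → ℝ) × (Fin n → ℝ) => (eDot φ p.1 - eDot φ p.2) ^ 2) π := by
        have h1 : (fun p : (Fin n → ℝ) × (Fin n → ℝ) => (eDot φ p.1 - eDot φ p.2) ^ 2)
            = fun p => (eDot φ p.1) ^ 2 - 2 * (eDot φ p.1 * eDot φ p.2)
              + (eDot φ p.2) ^ 2 := by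
          funext p; ring
        rw [h1]
        exact (hF2.sub (hFG.const_mul 2)).add hG2
      have hW2b : ∫ p, (eDot φ (p : (Fin n → ℝ) × (Fin n → ℝ)).1 - eDot φ p.2) ^ 2 ∂π
          ≤ nsq * (δ + η) := by
        have hnn : 0 ≤ᵐ[π] fun p : (Fin n → ℝ) × (Fin n → ℝ) =>
            (eDot φ p.1 - eDot φ p.2) ^ 2 :=
          Filter.Eventually.of_forall fun p => sq_nonneg _
        have h1 := MeasureTheory.ofReal_integral_eq_lintegral_ofReal hW2int hnn
        have h2 : ∫⁻ p, ENNReal.ofReal ((eDot φ (p : (Fin n → ℝ) × (Fin n → ℝ)).1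
            - eDot φ p.2) ^ 2) ∂π ≤ ENNReal.ofReal nsq * transportCost π := by
          rw [transportCost, ← lintegral_const_mul' _ _ ENNReal.ofReal_ne_top]
          refine lintegral_mono fun p => ?_
          rw [← ENNReal.ofReal_mul hnsq.le]
          refine ENNReal.ofReal_le_ofReal ?_
          have hd : eDot φ p.1 - eDot φ p.2 = ∑ j, φ j * (p.1 j - p.2 j) := by
            show (∑ j, φ j * p.1 j) - (∑ j, φ j * p.2 j) = _
            rw [← Finset.sum_sub_distrib]
            exact Finset.sum_congr rfl fun j _ => by ring
          rw [hd]
          calc (∑ j, φ j * (p.1 j - p.2 j)) ^ 2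
              ≤ (∑ j, φ j ^ 2) * ∑ j, (p.1 j - p.2 j) ^ 2 :=
                Finset.sum_mul_sq_le_sq_mul_sq _ _ _
            _ = nsq * ∑ j, (p.1 j - p.2 j) ^ 2 := by rw [← hnsqdef]
        have h3 : ENNReal.ofReal nsq * transportCost π
            ≤ ENNReal.ofReal (nsq * (δ + η)) := by
          rw [ENNReal.ofReal_mul hnsq.le]
          exact mul_le_mul_right hρ.le _
        have h4 : ENNReal.ofReal (∫ p, (eDot φ (p : (Fin n → ℝ) × (Fin n → ℝ)).1
            - eDot φ p.2) ^ 2 ∂π) ≤ ENNReal.ofReal (nsq * (δ + η)) := by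
          rw [h1]; exact le_trans h2 h3
        exact (ENNReal.ofReal_le_ofReal_iff (by positivity)).1 h4
      have tri := sqrt_var_triangle π hF hG hF2 hG2 hFG
      rw [hEG, hEG2, hEF, hEF2] at tri
      have htriV : V + μbar ^ 2 - μbar ^ 2 = V := by ring
      rw [htriV] at tri
      have hC2 : α - μbar = C := hCdef.symm
      rw [hC2] at tri
      have hmono : Real.sqrt ((∫ p, (eDot φ (p : (Fin n → ℝ) × (Fin n → ℝ)).1
          - eDot φ p.2) ^ 2 ∂π) - C ^ 2) ≤ Real.sqrt (nsq * (δ + η) - C ^ 2) :=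
        Real.sqrt_le_sqrt (by linarith)
      linarith
    have key2 : Real.sqrt V ≤ Real.sqrt ((∫ x, (eDot φ x) ^ 2 ∂Q) - α ^ 2)
        + Real.sqrt Δ := by
      refine le_of_forall_pos_le_add fun ε hε => ?_
      have hsn : 0 < Real.sqrt nsq := Real.sqrt_pos.2 hnsq
      have hη : 0 < (ε / Real.sqrt nsq) ^ 2 := by positivity
      have h1 := key ((ε / Real.sqrt nsq) ^ 2) hη
      have h2 : nsq * (δ + (ε / Real.sqrt nsq) ^ 2) - C ^ 2
          = Δ + nsq * (ε / Real.sqrt nsq) ^ 2 := by rw [hΔdef]; ring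
      have h3 : Real.sqrt (Δ + nsq * (ε / Real.sqrt nsq) ^ 2)
          ≤ Real.sqrt Δ + Real.sqrt (nsq * (ε / Real.sqrt nsq) ^ 2) :=
        sqrt_add_le' hΔ (by positivity)
      have h4 : Real.sqrt (nsq * (ε / Real.sqrt nsq) ^ 2) = ε := by
        rw [Real.sqrt_mul hnsq.le, Real.sqrt_sq (by positivity)]
        rw [div_eq_mul_inv, ← mul_assoc]
        rw [mul_comm (Real.sqrt nsq) ε, mul_assoc,
          mul_inv_cancel₀ (ne_of_gt hsn), mul_one]
      rw [h2] at h1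
      linarith
    have hRle : R ≤ Real.sqrt ((∫ x, (eDot φ x) ^ 2 ∂Q) - α ^ 2) := by
      refine max_le ?_ (Real.sqrt_nonneg _)
      linarith
    calc R ^ 2 ≤ Real.sqrt ((∫ x, (eDot φ x) ^ 2 ∂Q) - α ^ 2) ^ 2 :=
          pow_le_pow_left₀ hR0 hRle 2
      _ = (∫ x, (eDot φ x) ^ 2 ∂Q) - α ^ 2 := Real.sq_sqrt hv0'
  exact le_antisymm (csInf_le ⟨R ^ 2, fun v hv => hlow v hv⟩ hmem)
    (le_csInf ⟨_, hmem⟩ hlow)
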